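/- arXiv:1004.5409 — 3 statements merged into one kernel-verified Lean document; each statement's English description precedes it below -/
import Mathlib

section
/- Let H_F be Hermitian on ℂ^N with ground-state energy E_F and spectral projection P_F onto the E_F-eigenspace, and suppose every other eigenvalue of H_F is at distance at least g_F > 0 from E_F. Let ψ_I be a unit vector and δ₂ = ‖P_F ψ_I‖. Then for p > 0, |e^{−p} Σ_{k=1}^{∞} (p^k/k!) ⟨ψ_I, e^{ik(H_F − E_F)} ψ_I⟩ − δ₂² | ≤ e^{−p(1−cos g_F)} + e^{−p}, provided all eigenvalue gaps λ − E_F of H_F satisfy 1 − cos(λ − E_F) ≥ 1 − cos g_F for λ ≠ E_F. -/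
set_option autoImplicit false

open scoped InnerProductSpace
open Complex

lemma exp_apply_eigenvector {E : Type*} [NormedAddCommGroup E] [NormedSpace ℂ E]
    [CompleteSpace E] (T : E →L[ℂ] E) (x : E) (a : ℂ) (h : T x = a • x) :
    NormedSpace.exp T x = Complex.exp a • x := by
  have hpow : ∀ n : ℕ, (T ^ n) x = a ^ n • x := by
    intro n
    induction n with
    | zero => simp
    | succ n ih =>
      rw [pow_succ, pow_succ, ContinuousLinearMap.mul_apply, h, map_smul, ih,
        smul_smul]
      rw [mul_comm]
  have hs : Summable fun n : ℕ => ((n.factorial : ℂ))⁻¹ • T ^ n :=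
    NormedSpace.expSeries_summable' T
  have happ : NormedSpace.exp T x = ∑' n : ℕ, (((n.factorial : ℂ))⁻¹ • T ^ n) x := by
    rw [NormedSpace.exp_eq_tsum ℂ]
    exact (ContinuousLinearMap.apply ℂ E x).map_tsum hs
  rw [happ]
  have h2 : ∀ n : ℕ, (((n.factorial : ℂ))⁻¹ • T ^ n) x
      = (((n.factorial : ℂ))⁻¹ * a ^ n) • x := by
    intro n
    rw [ContinuousLinearMap.smul_apply, hpow, smul_smul]
  rw [tsum_congr h2]
  have hsa : Summable fun n : ℕ => ((n.factorial : ℂ))⁻¹ * a ^ n := by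
    simpa [smul_eq_mul] using NormedSpace.expSeries_summable' (𝕂 := ℂ) a
  rw [hsa.tsum_smul_const]
  congr 1
  rw [Complex.exp_eq_exp_ℂ, NormedSpace.exp_eq_tsum ℂ]
  simp [smul_eq_mul]

/-- quantum counting estimate.  If `H_F` is Hermitian with orthonormal
eigenbasis `v` and eigenvalues `λ`, ground-state energy `E_F` with spectral projection
`P_F`, such that every other eigenvalue `λ j ≠ E_F` satisfies
`1 − cos(λ j − E_F) ≥ 1 − cos g_F > 0`, and `δ₂ = ‖P_F ψ_I‖` for a unit vector `ψ_I`,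
then `|e^{−p} Σ_{k≥1} (p^k/k!) ⟨ψ_I, e^{ik(H_F − E_F)} ψ_I⟩ − δ₂²|
  ≤ e^{−p(1−cos g_F)} + e^{−p}`. -/
theorem stmt7 {N : ℕ} (HF PF : EuclideanSpace ℂ (Fin N) →L[ℂ] EuclideanSpace ℂ (Fin N))
    (hHF : IsSelfAdjoint HF)
    (v : OrthonormalBasis (Fin N) ℂ (EuclideanSpace ℂ (Fin N))) (lam : Fin N → ℝ)
    (heig : ∀ j, HF (v j) = (lam j : ℂ) • v j)
    (EF gF : ℝ) (hgF : 0 < 1 - Real.cos gF)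
    (hEFeig : ∃ j, lam j = EF)
    (hground : ∀ j, EF ≤ lam j)
    (hgap : ∀ j, lam j ≠ EF → 1 - Real.cos gF ≤ 1 - Real.cos (lam j - EF))
    (hPF : ∀ x, PF x = ∑ j, if lam j = EF then ⟪v j, x⟫_ℂ • v j else 0)
    (ψI : EuclideanSpace ℂ (Fin N)) (hψI : ‖ψI‖ = 1)
    (δ₂ : ℝ) (hδ₂ : δ₂ = ‖PF ψI‖) (p : ℝ) (hp : 0 < p) :
    ‖Real.exp (-p) * ∑' k : ℕ,
        (p : ℂ) ^ (k + 1) / (Nat.factorial (k + 1)) *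
          ⟪ψI, (NormedSpace.exp
            ((Complex.I * (k + 1 : ℕ)) • (HF - (EF : ℂ) • 1))) ψI⟫_ℂ
      - (δ₂ : ℂ) ^ 2‖
    ≤ Real.exp (-p * (1 - Real.cos gF)) + Real.exp (-p) := by
  classical
  set c : Fin N → ℂ := fun j => ⟪v j, ψI⟫_ℂ with hc
  set w : Fin N → ℝ := fun j => Complex.normSq (c j) with hw
  set z : Fin N → ℂ := fun j => Complex.exp (Complex.I * ((lam j : ℂ) - EF)) with hz
  set B : ℝ := Real.exp (-p * (1 - Real.cos gF)) + Real.exp (-p) with hB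
  have hortho : ∀ i j, ⟪v i, v j⟫_ℂ = if i = j then 1 else 0 :=
    fun i j => orthonormal_iff_ite.mp v.orthonormal i j
  -- pairing formula
  have hpair : ∀ d e : Fin N → ℂ,
      ⟪∑ j, d j • v j, ∑ j, e j • v j⟫_ℂ = ∑ j, (starRingEnd ℂ) (d j) * e j := by
    intro d e
    rw [sum_inner]
    refine Finset.sum_congr rfl fun j _ => ?_
    rw [inner_smul_left, inner_sum]
    simp only [inner_smul_right, hortho, mul_ite, mul_one, mul_zero,
      Finset.sum_ite_eq, Finset.mem_univ, if_true]
  have hrepr : ∑ j, c j • v j = ψI := v.sum_repr' ψI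
  have hconjc : ∀ j, (starRingEnd ℂ) (c j) * c j = (w j : ℂ) := by
    intro j
    rw [hw]
    simp [Complex.normSq_eq_conj_mul_self]
  -- total weight one
  have hsum1 : ∑ j, w j = 1 := by
    have h1 : ⟪ψI, ψI⟫_ℂ = ∑ j, (starRingEnd ℂ) (c j) * c j := by
      conv_lhs => rw [← hrepr]
      exact hpair c c
    rw [inner_self_eq_norm_sq_to_K, hψI] at h1
    have h2 : ((1 : ℝ) : ℂ) = ((∑ j, w j : ℝ) : ℂ) := by
      push_cast
      simpa [hconjc] using h1
    exact_mod_cast h2.symm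
  have hwnonneg : ∀ j, 0 ≤ w j := fun j => Complex.normSq_nonneg _
  set T : EuclideanSpace ℂ (Fin N) →L[ℂ] EuclideanSpace ℂ (Fin N)
    := HF - (EF : ℂ) • 1 with hTdef
  have hT : ∀ j, T (v j) = ((lam j : ℂ) - EF) • v j := by
    intro j
    rw [hTdef]
    rw [ContinuousLinearMap.sub_apply, ContinuousLinearMap.smul_apply,
      ContinuousLinearMap.one_apply, heig, sub_smul]
  have hexpvec : ∀ (k : ℕ) (j), (NormedSpace.exp ((Complex.I * ((k + 1 : ℕ) : ℂ)) • T)) (v j)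
      = ((z j) ^ (k + 1)) • v j := by
    intro k j
    have h1 : ((Complex.I * ((k + 1 : ℕ) : ℂ)) • T) (v j)
        = (((k + 1 : ℕ) : ℂ) * (Complex.I * ((lam j : ℂ) - EF))) • v j := by
      rw [ContinuousLinearMap.smul_apply, hT, smul_smul]
      congr 1
      ring
    rw [exp_apply_eigenvector _ _ _ h1, Complex.exp_nat_mul, hz]
  -- the inner products
  have hE : ∀ k : ℕ, ⟪ψI, (NormedSpace.exp ((Complex.I * ((k + 1 : ℕ) : ℂ)) • T)) ψI⟫_ℂ
      = ∑ j, (w j : ℂ) * (z j) ^ (k + 1) := by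
    intro k
    have hU : (NormedSpace.exp ((Complex.I * ((k + 1 : ℕ) : ℂ)) • T)) ψI
        = ∑ j, (c j * (z j) ^ (k + 1)) • v j := by
      conv_lhs => rw [← hrepr]
      rw [map_sum]
      refine Finset.sum_congr rfl fun j _ => ?_
      rw [map_smul, hexpvec k j, smul_smul]
    rw [hU, ← hrepr, hpair]
    refine Finset.sum_congr rfl fun j _ => ?_
    rw [← hconjc j]
    ring
  -- delta squared
  have hδsq : ((δ₂ : ℝ) : ℂ) ^ 2 = ∑ j, (if lam j = EF then (w j : ℂ) else 0) := by
    have hPF' : PF ψI = ∑ j, (if lam j = EF then c j else 0) • v j := by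
      rw [hPF]
      refine Finset.sum_congr rfl fun j _ => ?_
      by_cases h : lam j = EF
      · rw [if_pos h, if_pos h]
      · rw [if_neg h, if_neg h, zero_smul]
    have h1 : ⟪PF ψI, PF ψI⟫_ℂ = ∑ j, (if lam j = EF then (w j : ℂ) else 0) := by
      rw [hPF', hpair]
      refine Finset.sum_congr rfl fun j _ => ?_
      by_cases h : lam j = EF <;> simp [h, hconjc j]
    rw [inner_self_eq_norm_sq_to_K] at h1
    rw [hδ₂]
    exact_mod_cast h1
  -- exp series tail
  have hexpser : ∀ x : ℂ, ∑' k : ℕ, x ^ (k + 1) / (Nat.factorial (k + 1)) = Complex.exp x - 1 := by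
    intro x
    have hs := NormedSpace.expSeries_div_summable x
    have h0 := Summable.tsum_eq_zero_add hs
    have hx : Complex.exp x = ∑' n : ℕ, x ^ n / (n.factorial : ℂ) := by
      rw [Complex.exp_eq_exp_ℂ, NormedSpace.exp_eq_tsum_div]
    rw [hx, h0]
    simp
  -- summability of individual series
  have hsumm : ∀ j, Summable fun k : ℕ =>
      (w j : ℂ) * (((p : ℂ) * z j) ^ (k + 1) / (Nat.factorial (k + 1))) := by
    intro j
    exact (((summable_nat_add_iff 1).mpr
      (NormedSpace.expSeries_div_summable ((p : ℂ) * z j)))).mul_left _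
  -- rewrite the tsum
  have hts : ∑' k : ℕ, (p : ℂ) ^ (k + 1) / (Nat.factorial (k + 1)) *
        ⟪ψI, (NormedSpace.exp ((Complex.I * ((k + 1 : ℕ) : ℂ)) • T)) ψI⟫_ℂ
      = ∑ j, (w j : ℂ) * (Complex.exp ((p : ℂ) * z j) - 1) := by
    have h1 : ∀ k : ℕ, (p : ℂ) ^ (k + 1) / (Nat.factorial (k + 1)) *
        ⟪ψI, (NormedSpace.exp ((Complex.I * ((k + 1 : ℕ) : ℂ)) • T)) ψI⟫_ℂ
        = ∑ j, (w j : ℂ) * (((p : ℂ) * z j) ^ (k + 1) / (Nat.factorial (k + 1))) := by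
      intro k
      rw [hE k, Finset.mul_sum]
      refine Finset.sum_congr rfl fun j _ => ?_
      rw [mul_pow]
      ring
    rw [tsum_congr h1, Summable.tsum_finsetSum (fun j _ => hsumm j)]
    refine Finset.sum_congr rfl fun j _ => ?_
    rw [tsum_mul_left, hexpser]
  -- express LHS as a single finite sum
  have hmain : (Real.exp (-p) : ℂ) * (∑ j, (w j : ℂ) * (Complex.exp ((p : ℂ) * z j) - 1))
        - ((δ₂ : ℝ) : ℂ) ^ 2
      = ∑ j, (w j : ℂ) * ((Real.exp (-p) : ℂ) * (Complex.exp ((p : ℂ) * z j) - 1)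
          - (if lam j = EF then 1 else 0)) := by
    rw [hδsq, Finset.mul_sum, ← Finset.sum_sub_distrib]
    refine Finset.sum_congr rfl fun j _ => ?_
    by_cases h : lam j = EF <;> simp [h] <;> ring
  -- per-term bound
  have hbound : ∀ j, ‖(w j : ℂ) * ((Real.exp (-p) : ℂ) * (Complex.exp ((p : ℂ) * z j) - 1)
      - (if lam j = EF then 1 else 0))‖ ≤ w j * B := by
    intro j
    rw [norm_mul, Complex.norm_real, Real.norm_eq_abs, _root_.abs_of_nonneg (hwnonneg j)]
    refine mul_le_mul_of_nonneg_left ?_ (hwnonneg j)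
    by_cases h : lam j = EF
    · have hz1 : z j = 1 := by
        rw [hz]
        simp [h]
      rw [if_pos h, hz1, mul_one]
      have hr : Real.exp (-p) * (Real.exp p - 1) - 1 = -Real.exp (-p) := by
        rw [mul_sub, ← Real.exp_add]
        norm_num
      have : (Real.exp (-p) : ℂ) * (Complex.exp (p : ℂ) - 1) - 1 = -(Real.exp (-p) : ℂ) := by
        rw [← Complex.ofReal_exp]
        exact_mod_cast hr
      rw [this, norm_neg, Complex.norm_real, Real.norm_eq_abs,
        _root_.abs_of_nonneg (Real.exp_pos _).le, hB]
      have := (Real.exp_pos (-p * (1 - Real.cos gF))).le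
      linarith
    · rw [if_neg h, sub_zero, mul_sub, mul_one]
      refine (norm_sub_le _ _).trans ?_
      have h1 : ‖(Real.exp (-p) : ℂ) * Complex.exp ((p : ℂ) * z j)‖
          ≤ Real.exp (-p * (1 - Real.cos gF)) := by
        rw [norm_mul, Complex.norm_real, Real.norm_eq_abs, _root_.abs_of_nonneg (Real.exp_pos _).le,
          Complex.norm_exp]
        have hre : ((p : ℂ) * z j).re = p * Real.cos (lam j - EF) := by
          rw [Complex.re_ofReal_mul]
          simp only [hz]
          congr 1
          have : Complex.I * ((lam j : ℂ) - EF) = (((lam j - EF : ℝ) : ℂ)) * Complex.I := by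
            push_cast; ring
          rw [this, Complex.exp_ofReal_mul_I_re]
        rw [hre, ← Real.exp_add]
        apply Real.exp_le_exp.mpr
        have := hgap j h
        nlinarith
      have h2 : ‖(Real.exp (-p) : ℂ)‖ = Real.exp (-p) := by
        rw [Complex.norm_real, Real.norm_eq_abs, _root_.abs_of_nonneg (Real.exp_pos _).le]
      rw [h2, hB]
      linarith
  calc ‖(Real.exp (-p) : ℂ) * ∑' k : ℕ,
        (p : ℂ) ^ (k + 1) / (Nat.factorial (k + 1)) *
          ⟪ψI, (NormedSpace.exp
            ((Complex.I * ((k + 1 : ℕ) : ℂ)) • T)) ψI⟫_ℂ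
      - ((δ₂ : ℝ) : ℂ) ^ 2‖
      = ‖∑ j, (w j : ℂ) * ((Real.exp (-p) : ℂ) * (Complex.exp ((p : ℂ) * z j) - 1)
          - (if lam j = EF then 1 else 0))‖ := by rw [hts, hmain]
    _ ≤ ∑ j, ‖(w j : ℂ) * ((Real.exp (-p) : ℂ) * (Complex.exp ((p : ℂ) * z j) - 1)
          - (if lam j = EF then 1 else 0))‖ := norm_sum_le _ _
    _ ≤ ∑ j, w j * B := Finset.sum_le_sum fun j _ => hbound j
    _ = B := by rw [← Finset.sum_mul, hsum1, one_mul]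
end

section
/- Let g : [0,1] → ℝ be differentiable with |g'(s)| ≥ κ > 0 on [0,1], and let ε > 0. Then ∫₀¹ ds / √(g(s)² + ε²) ≤ (2/κ) · ln( (√(G² + ε²) + G)/ε ), where G = max_{s} |g(s)|; in particular if |g| ≤ 1 on [0,1] and ε < 1 then ∫₀¹ ds/√(g(s)²+ε²) ≤ −(4/κ) ln(ε/2). -/
set_option autoImplicit false

open intervalIntegral

section auxlemmas

open Set Real

lemma aux_growth (g : ℝ → ℝ) (κ : ℝ) (hdiff : Differentiable ℝ g)
    (h : ∀ s ∈ Icc (0:ℝ) 1, κ ≤ deriv g s) :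
    ∀ s ∈ Icc (0:ℝ) 1, ∀ t ∈ Icc (0:ℝ) 1, s ≤ t → κ * (t - s) ≤ g t - g s := by
  have hmono : MonotoneOn (fun x => g x - κ * x) (Icc (0:ℝ) 1) := by
    have hc : Continuous g := hdiff.continuous
    apply monotoneOn_of_deriv_nonneg (convex_Icc 0 1) (by fun_prop)
    · intro x _
      exact ((hdiff x).sub ((differentiable_id.const_mul κ) x)).differentiableWithinAt
    · intro x hx
      have hx' : x ∈ Icc (0:ℝ) 1 := interior_subset hx
      have h2 : HasDerivAt (fun y : ℝ => κ * y) (κ * 1) x := (hasDerivAt_id x).const_mul κ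
      have hder : deriv (fun y => g y - κ * y) x = deriv g x - κ * 1 :=
        ((hdiff x).hasDerivAt.sub h2).deriv
      rw [hder]
      have := h x hx'
      simp only [mul_one]
      linarith
  intro s hs t ht hst
  have := hmono hs ht hst
  simp only at this
  linarith

lemma aux_sign (g : ℝ → ℝ) (κ : ℝ) (hκ : 0 < κ) (hdiff : Differentiable ℝ g)
    (hg' : ∀ s ∈ Icc (0:ℝ) 1, κ ≤ |deriv g s|) :
    (∀ s ∈ Icc (0:ℝ) 1, κ ≤ deriv g s) ∨
    (∀ s ∈ Icc (0:ℝ) 1, κ ≤ deriv (fun x => -g x) s) := by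
  have hd : ∀ x ∈ Icc (0:ℝ) 1, HasDerivWithinAt g (deriv g x) (Icc (0:ℝ) 1) x :=
    fun x _ => (hdiff x).hasDerivAt.hasDerivWithinAt
  have hne : ∀ x ∈ Icc (0:ℝ) 1, deriv g x ≠ 0 := by
    intro x hx h0
    have := hg' x hx; rw [h0] at this; simp at this; linarith
  rcases hasDerivWithinAt_forall_lt_or_forall_gt_of_forall_ne (convex_Icc 0 1) hd hne with h | h
  · right
    intro s hs
    have h1 := hg' s hs
    have h2 := h s hs
    rw [abs_of_neg h2] at h1
    have hder : deriv (fun x => -g x) s = -deriv g s := deriv.neg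
    linarith [hder ▸ h1]
  · left
    intro s hs
    have h1 := hg' s hs
    rw [abs_of_pos (h s hs)] at h1
    exact h1

lemma aux_c_incr (g : ℝ → ℝ) (κ : ℝ) (hκ : 0 < κ) (hcont : Continuous g)
    (grow : ∀ s ∈ Icc (0:ℝ) 1, ∀ t ∈ Icc (0:ℝ) 1, s ≤ t → κ * (t - s) ≤ g t - g s) :
    ∃ c ∈ Icc (0:ℝ) 1, ∀ s ∈ Icc (0:ℝ) 1, κ * |s - c| ≤ |g s| := by
  by_cases h0 : 0 ≤ g 0
  · refine ⟨0, by norm_num, ?_⟩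
    rintro s ⟨hs0, hs1⟩
    have hgr := grow 0 (by norm_num) s ⟨hs0, hs1⟩ hs0
    have h1 : 0 ≤ κ * s := mul_nonneg hκ.le hs0
    rw [sub_zero, abs_of_nonneg hs0, abs_of_nonneg (by linarith : (0:ℝ) ≤ g s)]
    linarith
  · by_cases h1 : g 1 ≤ 0
    · refine ⟨1, by norm_num, ?_⟩
      rintro s ⟨hs0, hs1⟩
      have hgr := grow s ⟨hs0, hs1⟩ 1 (by norm_num) hs1
      have hge : (0:ℝ) ≤ κ * (1 - s) := mul_nonneg hκ.le (by linarith)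
      rw [abs_of_nonpos (by linarith : s - 1 ≤ 0), abs_of_nonpos (by linarith : g s ≤ 0)]
      linarith
    · push_neg at h0 h1
      have h0mem : (0:ℝ) ∈ Icc (g 0) (g 1) := ⟨h0.le, h1.le⟩
      obtain ⟨c, hc, hgc⟩ := intermediate_value_Icc (zero_le_one) hcont.continuousOn h0mem
      refine ⟨c, hc, ?_⟩
      rintro s ⟨hs0, hs1⟩
      rcases le_total s c with hsc | hsc
      · have hgr := grow s ⟨hs0, hs1⟩ c hc hsc
        rw [hgc] at hgr
        have hge : (0:ℝ) ≤ κ * (c - s) := mul_nonneg hκ.le (by linarith)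
        rw [abs_of_nonpos (by linarith : s - c ≤ 0), abs_of_nonpos (by linarith : g s ≤ 0)]
        linarith
      · have hgr := grow c hc s ⟨hs0, hs1⟩ hsc
        rw [hgc] at hgr
        have hge : (0:ℝ) ≤ κ * (s - c) := mul_nonneg hκ.le (by linarith)
        rw [abs_of_nonneg (by linarith : (0:ℝ) ≤ s - c),
          abs_of_nonneg (by linarith : (0:ℝ) ≤ g s)]
        linarith

lemma aux_c (g : ℝ → ℝ) (κ : ℝ) (hκ : 0 < κ) (hdiff : Differentiable ℝ g)
    (hg' : ∀ s ∈ Icc (0:ℝ) 1, κ ≤ |deriv g s|) :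
    ∃ c ∈ Icc (0:ℝ) 1, ∀ s ∈ Icc (0:ℝ) 1, κ * |s - c| ≤ |g s| := by
  rcases aux_sign g κ hκ hdiff hg' with h | h
  · exact aux_c_incr g κ hκ hdiff.continuous (aux_growth g κ hdiff h)
  · obtain ⟨c, hc, hlow⟩ :=
      aux_c_incr (fun x => -g x) κ hκ hdiff.continuous.neg
        (aux_growth (fun x => -g x) κ hdiff.neg h)
    refine ⟨c, hc, ?_⟩
    intro s hs
    have := hlow s hs
    simpa using this

lemma aux_int (κ ε c : ℝ) (hκ : 0 < κ) (hε : 0 < ε) :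
    ∫ s in (0:ℝ)..1, 1 / Real.sqrt (κ ^ 2 * (s - c) ^ 2 + ε ^ 2)
      = (1 / κ) * (arsinh (κ * (1 - c) / ε) - arsinh (κ * (0 - c) / ε)) := by
  have key : ∀ s : ℝ, HasDerivAt (fun x => (1 / κ) * arsinh (κ * (x - c) / ε))
      (1 / Real.sqrt (κ ^ 2 * (s - c) ^ 2 + ε ^ 2)) s := by
    intro s
    have hinner : HasDerivAt (fun x : ℝ => κ * (x - c) / ε) (κ / ε) s := by
      have : HasDerivAt (fun x : ℝ => κ * (x - c) / ε) (κ * 1 / ε) s :=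
        (((hasDerivAt_id s).sub_const c).const_mul κ).div_const ε
      simpa using this
    have h1 := ((Real.hasDerivAt_arsinh (κ * (s - c) / ε)).comp s hinner).const_mul (1 / κ)
    convert h1 using 1 <;> try rfl
    have hpos : (0:ℝ) < κ ^ 2 * (s - c) ^ 2 + ε ^ 2 := by positivity
    have heq : (1:ℝ) + (κ * (s - c) / ε) ^ 2 = (κ ^ 2 * (s - c) ^ 2 + ε ^ 2) / ε ^ 2 := by
      field_simp
      ring
    rw [heq, Real.sqrt_div (by positivity) _, Real.sqrt_sq hε.le]
    have hsq : Real.sqrt (κ ^ 2 * (s - c) ^ 2 + ε ^ 2) > 0 := Real.sqrt_pos.2 hpos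
    field_simp
  have hcont : Continuous fun s => 1 / Real.sqrt (κ ^ 2 * (s - c) ^ 2 + ε ^ 2) := by
    apply Continuous.div continuous_const
    · fun_prop
    · intro x
      have : (0:ℝ) < κ ^ 2 * (x - c) ^ 2 + ε ^ 2 := by positivity
      positivity
  rw [integral_eq_sub_of_hasDerivAt (fun x _ => key x) (hcont.intervalIntegrable 0 1)]
  ring

lemma aux_arsinh_log (B ε : ℝ) (hB : 0 ≤ B) (hε : 0 < ε) :
    arsinh (B / ε) = Real.log ((Real.sqrt (B ^ 2 + ε ^ 2) + B) / ε) := by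
  rw [Real.arsinh]
  congr 1
  have heq : (1:ℝ) + (B / ε) ^ 2 = (B ^ 2 + ε ^ 2) / ε ^ 2 := by
    field_simp
    ring
  rw [heq, Real.sqrt_div (by positivity) _, Real.sqrt_sq hε.le]
  field_simp
  ring

lemma aux_main (g : ℝ → ℝ) (κ : ℝ) (hκ : 0 < κ)
    (hdiff : Differentiable ℝ g)
    (hg' : ∀ s ∈ Icc (0:ℝ) 1, κ ≤ |deriv g s|)
    (ε : ℝ) (hε : 0 < ε)
    (B : ℝ) (hB : ∀ s ∈ Icc (0:ℝ) 1, |g s| ≤ B) :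
    (∫ s in (0:ℝ)..1, 1 / Real.sqrt (g s ^ 2 + ε ^ 2)) ≤ (2 / κ) * arsinh (B / ε) := by
  obtain ⟨c, hc, hlow⟩ := aux_c g κ hκ hdiff hg'
  have hcg : Continuous g := hdiff.continuous
  have step1 : (∫ s in (0:ℝ)..1, 1 / Real.sqrt (g s ^ 2 + ε ^ 2)) ≤
      ∫ s in (0:ℝ)..1, 1 / Real.sqrt (κ ^ 2 * (s - c) ^ 2 + ε ^ 2) := by
    apply integral_mono_on zero_le_one
    · apply Continuous.intervalIntegrable
      apply Continuous.div continuous_const (by fun_prop)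
      intro x
      have : (0:ℝ) < g x ^ 2 + ε ^ 2 := by positivity
      positivity
    · apply Continuous.intervalIntegrable
      apply Continuous.div continuous_const (by fun_prop)
      intro x
      have : (0:ℝ) < κ ^ 2 * (x - c) ^ 2 + ε ^ 2 := by positivity
      positivity
    · intro s hs
      have h1 := hlow s hs
      have h2 : κ ^ 2 * (s - c) ^ 2 ≤ g s ^ 2 := by
        have e1 : κ ^ 2 * (s - c) ^ 2 = (κ * |s - c|) ^ 2 := by
          rw [mul_pow, sq_abs]
        have e2 : g s ^ 2 = |g s| ^ 2 := (sq_abs _).symm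
        rw [e1, e2]
        exact pow_le_pow_left₀ (by positivity) h1 2
      have hpos : (0:ℝ) < κ ^ 2 * (s - c) ^ 2 + ε ^ 2 := by positivity
      apply one_div_le_one_div_of_le (Real.sqrt_pos.2 hpos)
      exact Real.sqrt_le_sqrt (by linarith)
  have step2 := aux_int κ ε c hκ hε
  have hB0 : 0 ≤ B := le_trans (abs_nonneg _) (hB 0 (by norm_num))
  have hX : arsinh (κ * (1 - c) / ε) ≤ arsinh (B / ε) := by
    rw [Real.arsinh_le_arsinh]
    apply (div_le_div_iff_of_pos_right hε).2
    have := hlow 1 (by norm_num)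
    have h1 := hB 1 (by norm_num)
    rw [abs_of_nonneg (by linarith [hc.2] : (0:ℝ) ≤ 1 - c)] at this
    linarith
  have hY : -arsinh (B / ε) ≤ arsinh (κ * (0 - c) / ε) := by
    have e : arsinh (κ * (0 - c) / ε) = -arsinh (κ * c / ε) := by
      rw [show κ * (0 - c) / ε = -(κ * c / ε) by ring, Real.arsinh_neg]
    rw [e, neg_le_neg_iff, Real.arsinh_le_arsinh]
    apply (div_le_div_iff_of_pos_right hε).2
    have := hlow 0 (by norm_num)
    have h1 := hB 0 (by norm_num)
    rw [abs_of_nonpos (by linarith [hc.1] : (0:ℝ) - c ≤ 0)] at this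
    have : κ * c ≤ |g 0| := by linarith [this]
    linarith
  calc (∫ s in (0:ℝ)..1, 1 / Real.sqrt (g s ^ 2 + ε ^ 2))
      ≤ ∫ s in (0:ℝ)..1, 1 / Real.sqrt (κ ^ 2 * (s - c) ^ 2 + ε ^ 2) := step1
    _ = (1 / κ) * (arsinh (κ * (1 - c) / ε) - arsinh (κ * (0 - c) / ε)) := step2
    _ ≤ (1 / κ) * (arsinh (B / ε) + arsinh (B / ε)) := by
        apply mul_le_mul_of_nonneg_left (by linarith) (by positivity)
    _ = (2 / κ) * arsinh (B / ε) := by ring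

end auxlemmas

/-- for differentiable `g` with `|g'| ≥ κ > 0` on `[0,1]`, `ε > 0`, and
`G = max |g|`, one has `∫₀¹ ds/√(g²+ε²) ≤ (2/κ) ln((√(G²+ε²)+G)/ε)`; and if moreover
`|g| ≤ 1` and `ε < 1` then `∫₀¹ ds/√(g²+ε²) ≤ −(4/κ) ln(ε/2)`. -/
theorem stmt12 (g : ℝ → ℝ) (κ : ℝ) (hκ : 0 < κ)
    (hdiff : Differentiable ℝ g)
    (hg' : ∀ s ∈ Set.Icc (0:ℝ) 1, κ ≤ |deriv g s|)
    (ε : ℝ) (hε : 0 < ε)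
    (G : ℝ) (hG : ∀ s ∈ Set.Icc (0:ℝ) 1, |g s| ≤ G) :
    (∫ s in (0:ℝ)..1, 1 / Real.sqrt (g s ^ 2 + ε ^ 2)) ≤
      (2 / κ) * Real.log ((Real.sqrt (G ^ 2 + ε ^ 2) + G) / ε) ∧
    ((∀ s ∈ Set.Icc (0:ℝ) 1, |g s| ≤ 1) → ε < 1 →
      (∫ s in (0:ℝ)..1, 1 / Real.sqrt (g s ^ 2 + ε ^ 2)) ≤
        -(4 / κ) * Real.log (ε / 2)) := by
  constructor
  · have hG0 : 0 ≤ G := le_trans (abs_nonneg _) (hG 0 (by norm_num))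
    have := aux_main g κ hκ hdiff hg' ε hε G hG
    rwa [aux_arsinh_log G ε hG0 hε] at this
  · intro h1 hε1
    have hmain := aux_main g κ hκ hdiff hg' ε hε 1 h1
    refine hmain.trans ?_
    have hlog : -(4 / κ) * Real.log (ε / 2) = (4 / κ) * Real.log (2 / ε) := by
      rw [show (2:ℝ) / ε = (ε / 2)⁻¹ by field_simp, Real.log_inv]
      ring
    rw [hlog]
    have ht : (1:ℝ) ≤ 1 / ε := one_le_one_div hε hε1.le
    have harg : Real.arsinh (1 / ε) ≤ Real.log ((2 / ε) ^ 2) := by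
      rw [Real.arsinh]
      have hs : Real.sqrt (1 + (1 / ε) ^ 2) ≤ 1 + 1 / ε := by
        have h := Real.sqrt_le_sqrt (by nlinarith : (1:ℝ) + (1 / ε) ^ 2 ≤ (1 + 1 / ε) ^ 2)
        rwa [Real.sqrt_sq (by positivity)] at h
      have hposarg : (0:ℝ) < 1 / ε + Real.sqrt (1 + (1 / ε) ^ 2) := by
        have := Real.sqrt_nonneg (1 + (1 / ε) ^ 2)
        positivity
      apply Real.log_le_log hposarg
      rw [show ((2:ℝ) / ε) ^ 2 = 4 * (1 / ε) ^ 2 by ring]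
      nlinarith
    have hlog2 : Real.log ((2 / ε) ^ 2) = 2 * Real.log (2 / ε) := by
      rw [Real.log_pow]
      push_cast
      ring
    calc (2 / κ) * Real.arsinh (1 / ε) ≤ (2 / κ) * (2 * Real.log (2 / ε)) := by
          apply mul_le_mul_of_nonneg_left (by rw [← hlog2]; exact harg) (by positivity)
      _ = (4 / κ) * Real.log (2 / ε) := by ring
end

section
/- (Farhi–Gutmann precession) Let ψ_I, ψ_F be unit vectors in ℂ^N with ⟨ψ_I, ψ_F⟩ = δ > 0 real, and let H = −|ψ_I⟩⟨ψ_I| − |ψ_F⟩⟨ψ_F|. Then for ψ(t) = e^{−itH} ψ_I, the overlap satisfies |⟨ψ_F, ψ(t)⟩|² = sin²(δ t) + δ² cos²(δ t); in particular |⟨ψ_F, ψ(π/(2δ))⟩| = 1. -/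
set_option autoImplicit false

open scoped InnerProductSpace
open Complex

lemma exp_eigen_aux {E : Type*} [NormedAddCommGroup E] [NormedSpace ℂ E] [CompleteSpace E]
    (f : E →L[ℂ] E) (c : ℂ) (v : E) (h : f v = c • v) :
    NormedSpace.exp f v = Complex.exp c • v := by
  have hpow : ∀ n : ℕ, (f ^ n) v = c ^ n • v := by
    intro n; induction n with
    | zero => simp
    | succ n ih =>
      rw [pow_succ, ContinuousLinearMap.mul_apply, h, map_smul, ih, smul_smul, pow_succ, mul_comm]
  have hsum : Summable (fun n : ℕ => ((n.factorial : ℂ))⁻¹ • f ^ n) :=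
    NormedSpace.expSeries_summable' (𝕂 := ℂ) f
  have hsum2 : Summable (fun n : ℕ => ((n.factorial : ℂ))⁻¹ • c ^ n) :=
    NormedSpace.expSeries_summable' (𝕂 := ℂ) c
  have key : (ContinuousLinearMap.apply ℂ E v) (∑' n : ℕ, ((n.factorial : ℂ))⁻¹ • f ^ n)
      = ∑' n : ℕ, (ContinuousLinearMap.apply ℂ E v) (((n.factorial : ℂ))⁻¹ • f ^ n) :=
    (ContinuousLinearMap.apply ℂ E v).map_tsum hsum
  have key2 : ∀ n : ℕ, (ContinuousLinearMap.apply ℂ E v) (((n.factorial : ℂ))⁻¹ • f ^ n)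
      = (((n.factorial : ℂ))⁻¹ • c ^ n) • v := by
    intro n
    simp [ContinuousLinearMap.apply_apply, hpow n, smul_smul]
  rw [NormedSpace.exp_eq_tsum ℂ]
  show (ContinuousLinearMap.apply ℂ E v) (∑' n : ℕ, ((n.factorial : ℂ))⁻¹ • f ^ n) = _
  rw [key, tsum_congr key2, Summable.tsum_smul_const, Complex.exp_eq_exp_ℂ, NormedSpace.exp_eq_tsum ℂ]
  exact hsum2

lemma norm_sq_aux (δ t : ℝ) :
    ‖(2⁻¹ : ℂ) * (Complex.exp (Complex.I * t * (1 + δ)) * (δ + 1)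
        + Complex.exp (Complex.I * t * (1 - δ)) * (δ - 1))‖ ^ 2
      = Real.sin (δ * t) ^ 2 + δ ^ 2 * Real.cos (δ * t) ^ 2 := by
  have h1 : Complex.I * t * (1 + δ) = ((t + δ * t : ℝ) : ℂ) * Complex.I := by
    push_cast; ring
  have h2 : Complex.I * t * (1 - δ) = ((t - δ * t : ℝ) : ℂ) * Complex.I := by
    push_cast; ring
  have he : ∀ x : ℝ, Complex.exp ((x : ℂ) * Complex.I)
      = ((Real.cos x : ℝ) : ℂ) + ((Real.sin x : ℝ) : ℂ) * Complex.I := by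
    intro x
    rw [Complex.exp_mul_I, Complex.ofReal_cos, Complex.ofReal_sin]
  rw [h1, h2, he, he, Complex.sq_norm, Complex.normSq_apply]
  simp only [Complex.add_re, Complex.add_im, Complex.mul_re, Complex.mul_im,
    Complex.ofReal_re, Complex.ofReal_im, Complex.I_re, Complex.I_im,
    Complex.inv_re, Complex.inv_im, Complex.re_ofNat, Complex.im_ofNat,
    Complex.one_re, Complex.one_im]
  rw [Real.cos_add, Real.cos_sub, Real.sin_add, Real.sin_sub]
  have hs := Real.sin_sq_add_cos_sq t
  have hs2 := Real.sin_sq_add_cos_sq (δ * t)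
  norm_num
  nlinarith [hs, hs2]

/-- Farhi–Gutmann precession: for unit vectors `ψ_I, ψ_F` with
`⟨ψ_I, ψ_F⟩ = δ ∈ (0,1)` real, `H = −|ψ_I⟩⟨ψ_I| − |ψ_F⟩⟨ψ_F|`, and
`ψ t = e^{−itH} ψ_I`, one has `|⟨ψ_F, ψ t⟩|² = sin²(δt) + δ² cos²(δt)`; in particular
`|⟨ψ_F, ψ(π/(2δ))⟩| = 1`. -/
theorem stmt17 {N : ℕ} (ψI ψF : EuclideanSpace ℂ (Fin N))
    (hψI : ‖ψI‖ = 1) (hψF : ‖ψF‖ = 1)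
    (δ : ℝ) (hδ0 : 0 < δ) (hδ1 : δ < 1) (hinner : ⟪ψI, ψF⟫_ℂ = (δ : ℂ))
    (H : EuclideanSpace ℂ (Fin N) →L[ℂ] EuclideanSpace ℂ (Fin N))
    (hH : H = -(innerSL ℂ ψI).smulRight ψI - (innerSL ℂ ψF).smulRight ψF)
    (ψ : ℝ → EuclideanSpace ℂ (Fin N))
    (hψ : ∀ t, ψ t = (NormedSpace.exp ((-Complex.I * (t : ℂ)) • H)) ψI) :
    (∀ t : ℝ, ‖⟪ψF, ψ t⟫_ℂ‖ ^ 2 =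
      Real.sin (δ * t) ^ 2 + δ ^ 2 * Real.cos (δ * t) ^ 2) ∧
    ‖⟪ψF, ψ (Real.pi / (2 * δ))⟫_ℂ‖ = 1 := by
  have hII : ⟪ψI, ψI⟫_ℂ = 1 := by
    rw [inner_self_eq_norm_sq_to_K, hψI]; norm_num
  have hFF : ⟪ψF, ψF⟫_ℂ = 1 := by
    rw [inner_self_eq_norm_sq_to_K, hψF]; norm_num
  have hFI : ⟪ψF, ψI⟫_ℂ = (δ : ℂ) := by
    rw [← inner_conj_symm, hinner]; simp
  have hHI : H ψI = -ψI - (δ : ℂ) • ψF := by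
    simp [hH, ContinuousLinearMap.sub_apply, ContinuousLinearMap.neg_apply,
      ContinuousLinearMap.smulRight_apply, innerSL_apply_apply, hII, hFI, hψI]
  have hHF : H ψF = -((δ : ℂ) • ψI) - ψF := by
    simp [hH, ContinuousLinearMap.sub_apply, ContinuousLinearMap.neg_apply,
      ContinuousLinearMap.smulRight_apply, innerSL_apply_apply, hFF, hinner, hψF]
  set u : EuclideanSpace ℂ (Fin N) := ψI + ψF with hu
  set w : EuclideanSpace ℂ (Fin N) := ψI - ψF with hw
  have hval : ∀ t : ℝ, ⟪ψF, ψ t⟫_ℂ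
      = (2⁻¹ : ℂ) * (Complex.exp (Complex.I * t * (1 + δ)) * (δ + 1)
        + Complex.exp (Complex.I * t * (1 - δ)) * (δ - 1)) := by
    intro t
    set A : EuclideanSpace ℂ (Fin N) →L[ℂ] EuclideanSpace ℂ (Fin N) :=
      (-Complex.I * (t : ℂ)) • H with hA
    have hAu : A u = (Complex.I * t * (1 + δ)) • u := by
      rw [hA, ContinuousLinearMap.smul_apply, hu, map_add, hHI, hHF]
      rw [show (-ψI - (δ : ℂ) • ψF) + (-((δ : ℂ) • ψI) - ψF) = (-(1 + δ) : ℂ) • (ψI + ψF) by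
        module]
      rw [smul_smul]; ring_nf
    have hAw : A w = (Complex.I * t * (1 - δ)) • w := by
      rw [hA, ContinuousLinearMap.smul_apply, hw, map_sub, hHI, hHF]
      rw [show (-ψI - (δ : ℂ) • ψF) - (-((δ : ℂ) • ψI) - ψF) = (-(1 - δ) : ℂ) • (ψI - ψF) by
        module]
      rw [smul_smul]; ring_nf
    have hdecomp : ψI = (2⁻¹ : ℂ) • u + (2⁻¹ : ℂ) • w := by
      rw [hu, hw]; module
    have hexp : (NormedSpace.exp A) ψI
        = (2⁻¹ : ℂ) • (Complex.exp (Complex.I * t * (1 + δ)) • u)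
          + (2⁻¹ : ℂ) • (Complex.exp (Complex.I * t * (1 - δ)) • w) := by
      conv_lhs => rw [hdecomp]
      rw [map_add, map_smul, map_smul, exp_eigen_aux A _ u hAu, exp_eigen_aux A _ w hAw]
    rw [hψ t, ← hA, hexp]
    rw [inner_add_right, inner_smul_right, inner_smul_right, inner_smul_right, inner_smul_right]
    rw [hu, hw, inner_add_right, inner_sub_right, hFI, hFF]
    ring
  have hpart1 : ∀ t : ℝ, ‖⟪ψF, ψ t⟫_ℂ‖ ^ 2 =
      Real.sin (δ * t) ^ 2 + δ ^ 2 * Real.cos (δ * t) ^ 2 := by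
    intro t
    rw [hval t, norm_sq_aux]
  refine ⟨hpart1, ?_⟩
  have ht : δ * (Real.pi / (2 * δ)) = Real.pi / 2 := by
    field_simp
  have h2 := hpart1 (Real.pi / (2 * δ))
  rw [ht, Real.sin_pi_div_two, Real.cos_pi_div_two] at h2
  rw [← Real.sqrt_sq (norm_nonneg _), h2]
  norm_num
end
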